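/- For every s ∈ ℝ with π/8 ≤ s₁ − s ≤ π/2, the derivative of Ψ satisfies |Ψ'(s)| ≥ 1/2. -/

import Mathlib

/-- The circular helix `u(s) = (cos as, sin as, √(1−a²)·s)` in `ℝ³` (Euclidean). -/
noncomputable def helix (a : ℝ) (s : ℝ) : EuclideanSpace ℝ (Fin 3) :=
  (WithLp.equiv 2 (Fin 3 → ℝ)).symm
    ![Real.cos (a * s), Real.sin (a * s), Real.sqrt (1 - a ^ 2) * s]

lemma helix_norm_sq (a s₁ t : ℝ) : ‖helix a t - helix a s₁‖ ^ 2 =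
    (Real.cos (a*t) - Real.cos (a*s₁))^2 + (Real.sin (a*t) - Real.sin (a*s₁))^2
      + (Real.sqrt (1-a^2)*t - Real.sqrt (1-a^2)*s₁)^2 := by
  rw [EuclideanSpace.norm_eq, Real.sq_sqrt (by positivity)]
  simp [helix, Fin.sum_univ_three, WithLp.toLp_sub]

lemma helix_hasDerivAt (a : ℝ) (ha0 : 0 < a) (ha1 : a < 1) (s₁ s : ℝ) :
    HasDerivAt (fun t : ℝ => (Real.cos (a*t) - Real.cos (a*s₁))^2
      + (Real.sin (a*t) - Real.sin (a*s₁))^2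
      + (Real.sqrt (1-a^2)*t - Real.sqrt (1-a^2)*s₁)^2)
      (-(2*a*Real.sin (a*(s₁-s)) + 2*(1-a^2)*(s₁-s))) s := by
  have hb' : Real.sqrt (1-a^2) ^ 2 = 1 - a^2 := Real.sq_sqrt (by nlinarith)
  have h1 : HasDerivAt (fun t : ℝ => a * t) a s :=
    (hasDerivAt_id s).const_mul a |>.congr_deriv (mul_one a)
  have hc : HasDerivAt (fun t : ℝ => Real.cos (a*t)) (-Real.sin (a*s) * a) s :=
    (Real.hasDerivAt_cos (a*s)).comp s h1
  have hs : HasDerivAt (fun t : ℝ => Real.sin (a*t)) (Real.cos (a*s) * a) s :=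
    (Real.hasDerivAt_sin (a*s)).comp s h1
  set b := Real.sqrt (1-a^2)
  have hl : HasDerivAt (fun t : ℝ => b*t - b*s₁) b s := by
    simpa using (((hasDerivAt_id s).const_mul b).sub_const (b*s₁))
  have := (((hc.sub_const (Real.cos (a*s₁))).pow 2).add
    ((hs.sub_const (Real.sin (a*s₁))).pow 2)).add (hl.pow 2)
  convert this using 1
  · rfl
  · rfl
  · rfl
  rw [mul_sub, Real.sin_sub, ← hb']
  ring

/-- if `π/8 ≤ s₁ − s ≤ π/2` then `|Ψ'(s)| ≥ 1/2`,
where `Ψ(s) = ‖u(s) − u(s₁)‖²`. -/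
theorem statement12 (a : ℝ) (ha0 : 0 < a) (ha1 : a < 1) (s₁ : ℝ) :
    ∀ s : ℝ, Real.pi / 8 ≤ s₁ - s → s₁ - s ≤ Real.pi / 2 →
      1 / 2 ≤ |deriv (fun t => ‖helix a t - helix a s₁‖ ^ 2) s| := by
  intro s h1 h2
  have hfun : (fun t => ‖helix a t - helix a s₁‖ ^ 2)
      = fun t : ℝ => (Real.cos (a*t) - Real.cos (a*s₁))^2
        + (Real.sin (a*t) - Real.sin (a*s₁))^2
        + (Real.sqrt (1-a^2)*t - Real.sqrt (1-a^2)*s₁)^2 :=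
    funext (helix_norm_sq a s₁)
  rw [hfun, (helix_hasDerivAt a ha0 ha1 s₁ s).deriv]
  set r := s₁ - s with hr
  have hπ : (0:ℝ) < Real.pi := Real.pi_pos
  have hr0 : 0 < r := lt_of_lt_of_le (by positivity) h1
  have har0 : 0 ≤ a * r := by positivity
  have har2 : a * r ≤ Real.pi / 2 := by nlinarith
  have hsin := Real.mul_le_sin har0 har2
  have h1a2 : (0:ℝ) ≤ 1 - a^2 := by nlinarith
  have hsin0 : 0 ≤ Real.sin (a*r) := le_trans (by positivity) hsin
  have hkey : 1/2 ≤ 2*a*Real.sin (a*r) + 2*(1-a^2)*r := by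
    have hlow : 2*a*(2/Real.pi*(a*r)) ≤ 2*a*Real.sin (a*r) := by nlinarith
    have hpi2 : (2:ℝ) < Real.pi := by
      have := Real.pi_gt_three; linarith
    have hm : (0:ℝ) ≤ 2 - 4/Real.pi := by
      rw [sub_nonneg, div_le_iff₀ hπ]; nlinarith
    have hprod : 0 ≤ (1-a^2)*r*(2-4/Real.pi) :=
      mul_nonneg (mul_nonneg h1a2 hr0.le) hm
    have heq : 2*a*(2/Real.pi*(a*r)) + 2*(1-a^2)*r
        = 4/Real.pi*r + (1-a^2)*r*(2-4/Real.pi) := by ring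
    have h5 : (1:ℝ)/2 ≤ 4/Real.pi * r := by
      rw [div_mul_eq_mul_div, le_div_iff₀ hπ]
      nlinarith
    linarith
  have habs : |-(2*a*Real.sin (a*r) + 2*(1-a^2)*r)| = 2*a*Real.sin (a*r) + 2*(1-a^2)*r := by
    rw [abs_neg, abs_of_nonneg]
    nlinarith [mul_nonneg ha0.le hsin0, mul_nonneg h1a2 hr0.le]
  rw [habs]
  exact hkey
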